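/- arXiv:1307.2392 — 2 statements merged into one kernel-verified Lean document; each statement's English description precedes it below -/
import Mathlib

section
/- Let f ∈ C²((0,∞)) vanish for all ξ ≥ a (for some a > 0) and suppose there exist c > 0 and σ ∈ (-1,1) such that |f^{(k)}(ξ)| ≤ c·ξ^{σ-k} for all ξ > 0 and k ∈ {0,1,2}. Then there is a constant C (depending only on σ and a) such that |∫₀^∞ e^{itξ} f(ξ) dξ| ≤ C·c·(1+t²)^{-(1+σ)/2} for all t ≥ 0. -/
open Complex MeasureTheory Set intervalIntegral Filter Real

private lemma hasDerivAt_cexp_Imul (t ξ : ℝ) :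
    HasDerivAt (fun x : ℝ => Complex.exp (Complex.I * t * x))
      (Complex.I * t * Complex.exp (Complex.I * t * ξ)) ξ := by
  have h0 : HasDerivAt (fun x : ℝ => ((x : ℂ))) 1 ξ := Complex.ofRealCLM.hasDerivAt
  have h1 := (h0.const_mul (Complex.I * t)).cexp
  simpa [mul_comm, mul_assoc, mul_left_comm] using h1

private lemma norm_cexp_Imul (t ξ : ℝ) : ‖Complex.exp (Complex.I * t * ξ)‖ = 1 := by
  rw [show Complex.I * t * ξ = ((t * ξ : ℝ) : ℂ) * Complex.I by push_cast; ring]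
  exact Complex.norm_exp_ofReal_mul_I _

set_option maxHeartbeats 1000000 in
/-- Oscillatory integral estimate (Lemma `osc`): if `f ∈ C²((0,∞))` vanishes for `ξ ≥ a`
and `|f^{(k)}(ξ)| ≤ c ξ^{σ-k}` for `k = 0,1,2` with `σ ∈ (-1,1)`, then
`|∫₀^∞ e^{itξ} f(ξ) dξ| ≤ C c ⟨t⟩^{-1-σ}` for all `t ≥ 0`. -/
theorem stmt0 (σ a : ℝ) (hσ : σ ∈ Set.Ioo (-1 : ℝ) 1) (ha : 0 < a) :
    ∃ C > 0, ∀ (f : ℝ → ℂ) (c : ℝ), 0 < c →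
      ContDiffOn ℝ 2 f (Set.Ioi 0) →
      (∀ ξ : ℝ, a ≤ ξ → f ξ = 0) →
      (∀ ξ > (0 : ℝ), ∀ k ≤ 2, ‖iteratedDerivWithin k f (Set.Ioi 0) ξ‖ ≤ c * ξ ^ (σ - k)) →
      ∀ t ≥ (0 : ℝ),
        ‖∫ ξ in Set.Ioi (0 : ℝ), Complex.exp (Complex.I * t * ξ) * f ξ‖ ≤
          C * c * (1 + t ^ 2) ^ (-(1 + σ) / 2) := by
  obtain ⟨hσ1, hσ2⟩ := hσ
  have h1σ : (0:ℝ) < 1 + σ := by linarith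
  have hs1 : (0:ℝ) < 1 - σ := by linarith
  set T : ℝ := max 1 a⁻¹ with hT
  have hT1 : (1:ℝ) ≤ T := le_max_left _ _
  have hTa : a⁻¹ ≤ T := le_max_right _ _
  have hT0 : (0:ℝ) < T := lt_of_lt_of_le one_pos hT1
  set K : ℝ := a ^ (1 + σ) / (1 + σ) with hK
  have hKpos : 0 < K := div_pos (Real.rpow_pos_of_pos ha _) h1σ
  set M : ℝ := 1 / (1 + σ) + 2 + 1 / (1 - σ) with hM
  have hMpos : 0 < M := by
    have : 0 < 1 / (1 + σ) := by positivity
    have : 0 < 1 / (1 - σ) := by positivity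
    positivity
  set C₁ : ℝ := K * (1 + T ^ 2) ^ ((1 + σ) / 2) with hC₁
  have hC₁pos : 0 < C₁ := mul_pos hKpos (Real.rpow_pos_of_pos (by positivity) _)
  refine ⟨C₁ + 2 * M, by positivity, ?_⟩
  intro f c hc hf hfa hb t ht
  -- basic facts about f
  have hUD : UniqueDiffOn ℝ (Set.Ioi (0:ℝ)) := isOpen_Ioi.uniqueDiffOn
  have hfc : ContinuousOn f (Set.Ioi 0) := hf.continuousOn
  have hf' : ContDiffOn ℝ 1 (deriv f) (Set.Ioi 0) :=
    hf.deriv_of_isOpen isOpen_Ioi (by norm_num)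
  have hfc' : ContinuousOn (deriv f) (Set.Ioi 0) := hf'.continuousOn
  have hfc'' : ContinuousOn (deriv (deriv f)) (Set.Ioi 0) :=
    hf'.continuousOn_deriv_of_isOpen isOpen_Ioi (by norm_num)
  have hdf : ∀ ξ ∈ Set.Ioi (0:ℝ), HasDerivAt f (deriv f ξ) ξ := by
    intro ξ hξ
    exact (((hf.differentiableOn (by norm_num)) ξ hξ).differentiableAt
      (isOpen_Ioi.mem_nhds hξ)).hasDerivAt
  have hdf' : ∀ ξ ∈ Set.Ioi (0:ℝ), HasDerivAt (deriv f) (deriv (deriv f) ξ) ξ := by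
    intro ξ hξ
    exact (((hf'.differentiableOn (by norm_num)) ξ hξ).differentiableAt
      (isOpen_Ioi.mem_nhds hξ)).hasDerivAt
  -- bounds for f, f', f''
  have hb0 : ∀ ξ > (0:ℝ), ‖f ξ‖ ≤ c * ξ ^ σ := by
    intro ξ hξ
    have := hb ξ hξ 0 (by norm_num)
    simpa using this
  have hb1 : ∀ ξ > (0:ℝ), ‖deriv f ξ‖ ≤ c * ξ ^ (σ - 1) := by
    intro ξ hξ
    have h := hb ξ hξ 1 (by norm_num)
    rwa [iteratedDerivWithin_one, derivWithin_of_isOpen isOpen_Ioi hξ,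
      Nat.cast_one] at h
  have hb2 : ∀ ξ > (0:ℝ), ‖deriv (deriv f) ξ‖ ≤ c * ξ ^ (σ - 2) := by
    intro ξ hξ
    have h := hb ξ hξ 2 (by norm_num)
    have e1 : iteratedDerivWithin 2 f (Set.Ioi 0) ξ = deriv (deriv f) ξ := by
      rw [show (2:ℕ) = 1 + 1 from rfl, iteratedDerivWithin_succ,
        derivWithin_of_isOpen isOpen_Ioi hξ]
      have hev : (fun x => iteratedDerivWithin 1 f (Set.Ioi 0) x) =ᶠ[nhds ξ] deriv f := by
        filter_upwards [isOpen_Ioi.mem_nhds hξ] with x hx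
        rw [iteratedDerivWithin_one, derivWithin_of_isOpen isOpen_Ioi hx]
      exact hev.deriv_eq
    rw [e1] at h
    simpa using h
  -- deriv f vanishes at a
  have hdfIoi : ∀ x ∈ Set.Ioi a, deriv f x = 0 := by
    intro x hx
    have hev : f =ᶠ[nhds x] (fun _ => (0:ℂ)) := by
      filter_upwards [isOpen_Ioi.mem_nhds hx] with y hy
      exact hfa y (le_of_lt hy)
    rw [hev.deriv_eq]
    simp
  have hdfa : deriv f a = 0 := by
    have h1 : Filter.Tendsto (deriv f) (nhdsWithin a (Set.Ioi a)) (nhds (deriv f a)) :=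
      ((hfc'.continuousWithinAt (Set.mem_Ioi.2 ha)).mono (Set.Ioi_subset_Ioi ha.le)).tendsto
    have h2 : Filter.Tendsto (deriv f) (nhdsWithin a (Set.Ioi a)) (nhds 0) := by
      apply Filter.Tendsto.congr' _ tendsto_const_nhds
      filter_upwards [self_mem_nhdsWithin] with x hx
      exact (hdfIoi x hx).symm
    exact tendsto_nhds_unique h1 h2
  -- the integrand
  set F : ℝ → ℂ := fun ξ => Complex.exp (Complex.I * t * ξ) * f ξ with hF
  have hFnorm : ∀ ξ > (0:ℝ), ‖F ξ‖ ≤ c * ξ ^ σ := by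
    intro ξ hξ
    rw [hF]
    simp only [norm_mul, norm_cexp_Imul, one_mul]
    exact hb0 ξ hξ
  have hFcont : ContinuousOn F (Set.Ioi 0) := by
    apply ContinuousOn.mul _ hfc
    exact (Complex.continuous_exp.comp (by continuity)).continuousOn
  -- integrability on Ioc 0 b for any b > 0
  have hgint : ∀ b : ℝ, 0 < b → IntegrableOn (fun ξ => c * ξ ^ σ) (Set.Ioc 0 b) := by
    intro b hbpos
    have := (intervalIntegral.intervalIntegrable_rpow' (a := 0) (b := b) hσ1).const_mul c
    rwa [intervalIntegrable_iff_integrableOn_Ioc_of_le hbpos.le] at this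
  have hFint : ∀ b : ℝ, 0 < b → IntegrableOn F (Set.Ioc 0 b) := by
    intro b hbpos
    apply Integrable.mono' (hgint b hbpos)
    · exact (hFcont.mono Set.Ioc_subset_Ioi_self).aestronglyMeasurable measurableSet_Ioc
    · filter_upwards [ae_restrict_mem measurableSet_Ioc] with ξ hξ
      exact hFnorm ξ hξ.1
  -- the full integral equals the integral on Ioc 0 a
  have hsplit0 : (∫ ξ in Set.Ioi (0:ℝ), F ξ) = ∫ ξ in Set.Ioc 0 a, F ξ := by
    have hzero : ∀ ξ ∈ Set.Ioi a, F ξ = 0 := by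
      intro ξ hξ
      rw [hF]; simp [hfa ξ (le_of_lt hξ)]
    have hIa : (∫ ξ in Set.Ioi a, F ξ) = 0 := by
      rw [setIntegral_congr_fun measurableSet_Ioi hzero, MeasureTheory.integral_zero]
    have hint2 : IntegrableOn F (Set.Ioi a) := by
      apply IntegrableOn.congr_fun (integrableOn_zero (ε' := ℂ)) _ measurableSet_Ioi
      intro ξ hξ; exact (hzero ξ hξ).symm
    rw [← Set.Ioc_union_Ioi_eq_Ioi ha.le,
      setIntegral_union (Set.Ioc_disjoint_Ioi le_rfl) measurableSet_Ioi (hFint a ha) hint2,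
      hIa, add_zero]
  -- crude bound on Ioc 0 b
  have key0 : ∀ b : ℝ, 0 < b →
      ‖∫ ξ in Set.Ioc (0:ℝ) b, F ξ‖ ≤ c * b ^ (1 + σ) / (1 + σ) := by
    intro b hbpos
    rw [← intervalIntegral.integral_of_le hbpos.le]
    have h := intervalIntegral.norm_integral_le_of_norm_le
      (f := F) (g := fun ξ => c * ξ ^ σ) (μ := volume) (a := 0) (b := b) hbpos.le ?_ ?_
    · refine h.trans ?_
      have heq : (∫ ξ in (0:ℝ)..b, c * ξ ^ σ) = c * b ^ (1 + σ) / (1 + σ) := by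
        rw [intervalIntegral.integral_const_mul, integral_rpow (Or.inl hσ1),
          Real.zero_rpow (by linarith : (0:ℝ) < σ + 1).ne', sub_zero, add_comm σ 1]
        ring
      rw [heq]
    · filter_upwards with ξ hξ
      exact hFnorm ξ hξ.1
    · exact (intervalIntegral.intervalIntegrable_rpow' hσ1).const_mul c
  have hXpos : (0:ℝ) < (1 + t ^ 2) ^ (-(1 + σ) / 2) :=
    Real.rpow_pos_of_pos (by positivity) _
  set X : ℝ := (1 + t ^ 2) ^ (-(1 + σ) / 2) with hX
  rcases le_or_gt t T with htT | htT
  · -- small t : crude bound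
    have h1 : ‖∫ ξ in Set.Ioi (0:ℝ), F ξ‖ ≤ c * K := by
      rw [hsplit0]
      refine (key0 a ha).trans_eq ?_
      rw [hK, mul_div_assoc]
    have hcancel : (1 + T ^ 2) ^ ((1 + σ) / 2) * (1 + T ^ 2) ^ (-((1 + σ) / 2)) = 1 := by
      rw [← Real.rpow_add (by positivity : (0:ℝ) < 1 + T ^ 2)]
      rw [show (1 + σ) / 2 + -((1 + σ) / 2) = 0 by ring, Real.rpow_zero]
    have hTle : (1 + T ^ 2) ^ (-((1 + σ) / 2)) ≤ X := by
      rw [hX, neg_div]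
      exact Real.rpow_le_rpow_of_nonpos (by positivity) (by nlinarith) (by linarith)
    have hone : 1 ≤ (1 + T ^ 2) ^ ((1 + σ) / 2) * X := by
      calc (1:ℝ) = (1 + T ^ 2) ^ ((1 + σ) / 2) * (1 + T ^ 2) ^ (-((1 + σ) / 2)) := hcancel.symm
        _ ≤ (1 + T ^ 2) ^ ((1 + σ) / 2) * X :=
          mul_le_mul_of_nonneg_left hTle (Real.rpow_nonneg (by positivity) _)
    have h2 : c * K ≤ C₁ * c * X := by
      have := mul_le_mul_of_nonneg_left hone (show (0:ℝ) ≤ c * K by positivity)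
      calc c * K = c * K * 1 := (mul_one _).symm
        _ ≤ c * K * ((1 + T ^ 2) ^ ((1 + σ) / 2) * X) := this
        _ = C₁ * c * X := by rw [hC₁]; ring
    refine h1.trans (h2.trans ?_)
    have : (0:ℝ) ≤ 2 * M * c * X := by positivity
    nlinarith
  · -- large t : integration by parts
    have ht1 : (1:ℝ) ≤ t := hT1.trans htT.le
    have ht0 : (0:ℝ) < t := lt_of_lt_of_le one_pos ht1
    set ε : ℝ := t⁻¹ with hεdef
    have hε : 0 < ε := inv_pos.2 ht0
    have hεa : ε < a := by
      rw [hεdef, inv_lt_comm₀ ht0 ha]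
      exact lt_of_le_of_lt hTa htT
    -- split the integral
    have hint2 : IntegrableOn F (Set.Ioc ε a) :=
      (hFint a ha).mono_set (Set.Ioc_subset_Ioc hε.le le_rfl)
    have hsplit : (∫ ξ in Set.Ioi (0:ℝ), F ξ)
        = (∫ ξ in Set.Ioc 0 ε, F ξ) + ∫ ξ in ε..a, F ξ := by
      rw [hsplit0, ← Set.Ioc_union_Ioc_eq_Ioc hε.le hεa.le,
        setIntegral_union (Set.Ioc_disjoint_Ioc_of_le le_rfl) measurableSet_Ioc (hFint ε hε) hint2,
        intervalIntegral.integral_of_le hεa.le]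
    -- integration by parts setup
    set E : ℝ → ℂ := fun x => Complex.exp (Complex.I * t * x) with hE
    set d : ℂ := (Complex.I * t)⁻¹ with hd
    have hd0 : (Complex.I * (t:ℂ)) ≠ 0 := by
      apply mul_ne_zero Complex.I_ne_zero
      exact_mod_cast ht0.ne'
    have hdn : ‖d‖ = t⁻¹ := by
      rw [hd, norm_inv]
      simp [Complex.norm_I, abs_of_pos ht0]
    have hvd : ∀ x : ℝ, HasDerivAt (fun x : ℝ => d * E x) (E x) x := by
      intro x
      have h1 := (hasDerivAt_cexp_Imul t x).const_mul d
      have : d * (Complex.I * t * Complex.exp (Complex.I * t * x)) = E x := by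
        rw [hd, hE]
        field_simp [show (t:ℂ) ≠ 0 by exact_mod_cast ht0.ne']
      rwa [this] at h1
    have hwd : ∀ x : ℝ, HasDerivAt (fun x : ℝ => d * (d * E x)) (d * E x) x := by
      intro x
      exact (hvd x).const_mul d
    have hmem : ∀ x ∈ Set.uIcc ε a, x ∈ Set.Ioi (0:ℝ) := by
      intro x hx
      rw [Set.uIcc_of_le hεa.le] at hx
      exact lt_of_lt_of_le hε hx.1
    have hEcont : Continuous E := by
      rw [hE]; exact Complex.continuous_exp.comp (continuous_const.mul Complex.continuous_ofReal)
    have hf'int : IntervalIntegrable (deriv f) volume ε a :=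
      (hfc'.mono (fun x hx => hmem x hx)).intervalIntegrable
    have hf''int : IntervalIntegrable (deriv (deriv f)) volume ε a :=
      (hfc''.mono (fun x hx => hmem x hx)).intervalIntegrable
    have ibp1 : (∫ x in ε..a, f x * E x)
        = f a * (d * E a) - f ε * (d * E ε) - ∫ x in ε..a, deriv f x * (d * E x) :=
      intervalIntegral.integral_mul_deriv_eq_deriv_mul
        (fun x hx => hdf x (hmem x hx)) (fun x hx => hvd x)
        hf'int (hEcont.intervalIntegrable ε a)
    have ibp2 : (∫ x in ε..a, deriv f x * (d * E x))
        = deriv f a * (d * (d * E a)) - deriv f ε * (d * (d * E ε))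
          - ∫ x in ε..a, deriv (deriv f) x * (d * (d * E x)) :=
      intervalIntegral.integral_mul_deriv_eq_deriv_mul
        (fun x hx => hdf' x (hmem x hx)) (fun x hx => hwd x)
        hf''int ((hEcont.intervalIntegrable ε a).const_mul d)
    have hFE : (∫ ξ in ε..a, F ξ) = ∫ x in ε..a, f x * E x :=
      intervalIntegral.integral_congr (fun x _ => mul_comm _ _)
    have hibp : (∫ ξ in ε..a, F ξ)
        = -(f ε * (d * E ε)) + deriv f ε * (d * (d * E ε))
          + ∫ x in ε..a, deriv (deriv f) x * (d * (d * E x)) := by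
      rw [hFE, ibp1, ibp2, hfa a le_rfl, hdfa]
      ring
    -- norm estimates
    have hEn : ∀ x : ℝ, ‖E x‖ = 1 := fun x => norm_cexp_Imul t x
    have hB1 : ‖f ε * (d * E ε)‖ ≤ c * ε ^ σ * ε := by
      rw [norm_mul, norm_mul, hdn, hEn, mul_one, ← hεdef]
      exact mul_le_mul_of_nonneg_right (hb0 ε hε) hε.le
    have hB2 : ‖deriv f ε * (d * (d * E ε))‖ ≤ c * ε ^ (σ - 1) * (ε * ε) := by
      rw [norm_mul, norm_mul, norm_mul, hdn, hEn, mul_one, ← hεdef]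
      refine mul_le_mul_of_nonneg_right (hb1 ε hε) (by positivity)
    have hB3 : ‖∫ x in ε..a, deriv (deriv f) x * (d * (d * E x))‖
        ≤ c * (ε * ε) * (ε ^ (σ - 1) / (1 - σ)) := by
      have hbd := intervalIntegral.norm_integral_le_of_norm_le
        (f := fun x => deriv (deriv f) x * (d * (d * E x)))
        (g := fun x => c * (ε * ε) * x ^ (σ - 2)) (μ := volume) (a := ε) (b := a) hεa.le ?_ ?_
      · refine hbd.trans ?_
        rw [intervalIntegral.integral_const_mul,
          integral_rpow (Or.inr ⟨by intro h; apply hσ2.ne; linarith, by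
            rw [Set.uIcc_of_le hεa.le]; intro h; exact absurd h.1 (not_le.2 hε)⟩)]
        refine mul_le_mul_of_nonneg_left ?_ (by positivity)
        have hak : a ^ (σ - 1) ≤ ε ^ (σ - 1) :=
          Real.rpow_le_rpow_of_nonpos hε hεa.le (by linarith)
        have han : (0:ℝ) ≤ a ^ (σ - 1) := Real.rpow_nonneg ha.le _
        have heq : (a ^ (σ - 2 + 1) - ε ^ (σ - 2 + 1)) / (σ - 2 + 1)
            = (ε ^ (σ - 1) - a ^ (σ - 1)) / (1 - σ) := by
          rw [show σ - 2 + 1 = σ - 1 by ring, ← neg_div_neg_eq, neg_sub, neg_sub]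
        rw [heq]
        exact div_le_div₀ (Real.rpow_nonneg hε.le _) (by linarith) hs1 le_rfl
      · filter_upwards with x hx
        have hx0 : 0 < x := lt_trans hε hx.1
        rw [norm_mul, norm_mul, norm_mul, hdn, hEn, mul_one, ← hεdef]
        calc ‖deriv (deriv f) x‖ * (ε * ε) ≤ c * x ^ (σ - 2) * (ε * ε) :=
            mul_le_mul_of_nonneg_right (hb2 x hx0) (by positivity)
          _ = c * (ε * ε) * x ^ (σ - 2) := by ring
      · apply ContinuousOn.intervalIntegrable
        apply ContinuousOn.mul continuousOn_const
        apply ContinuousOn.rpow_const continuousOn_id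
        intro x hx
        exact Or.inl (ne_of_gt (hmem x hx))
    -- powers of ε
    have hε1 : ε ^ σ * ε = ε ^ (1 + σ) := by
      rw [add_comm, Real.rpow_add_one hε.ne']
    have hε2 : ε ^ (σ - 1) * (ε * ε) = ε ^ (1 + σ) := by
      rw [show (1 + σ) = (σ - 1) + 1 + 1 by ring, Real.rpow_add_one hε.ne',
        Real.rpow_add_one hε.ne']
      ring
    -- total bound by c * ε^(1+σ) * M
    have hnorm2 : ‖∫ ξ in ε..a, F ξ‖
        ≤ c * ε ^ σ * ε + c * ε ^ (σ - 1) * (ε * ε) + c * (ε * ε) * (ε ^ (σ - 1) / (1 - σ)) := by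
      rw [hibp]
      refine (norm_add₃_le).trans ?_
      rw [norm_neg]
      exact add_le_add (add_le_add hB1 hB2) hB3
    have htotal : ‖∫ ξ in Set.Ioi (0:ℝ), F ξ‖ ≤ c * ε ^ (1 + σ) * M := by
      rw [hsplit]
      refine (norm_add_le _ _).trans ?_
      have h1 := key0 ε hε
      have hrhs : c * ε ^ σ * ε + c * ε ^ (σ - 1) * (ε * ε)
            + c * (ε * ε) * (ε ^ (σ - 1) / (1 - σ))
          = c * ε ^ (1 + σ) + c * ε ^ (1 + σ) + c * ε ^ (1 + σ) / (1 - σ) := by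
        calc c * ε ^ σ * ε + c * ε ^ (σ - 1) * (ε * ε)
              + c * (ε * ε) * (ε ^ (σ - 1) / (1 - σ))
            = c * (ε ^ σ * ε) + c * (ε ^ (σ - 1) * (ε * ε))
              + c * (ε ^ (σ - 1) * (ε * ε)) / (1 - σ) := by ring
          _ = c * ε ^ (1 + σ) + c * ε ^ (1 + σ) + c * ε ^ (1 + σ) / (1 - σ) := by
              rw [hε1, hε2]
      have h2 := hnorm2.trans_eq hrhs
      calc ‖∫ ξ in Set.Ioc 0 ε, F ξ‖ + ‖∫ ξ in ε..a, F ξ‖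
          ≤ c * ε ^ (1 + σ) / (1 + σ)
            + (c * ε ^ (1 + σ) + c * ε ^ (1 + σ) + c * ε ^ (1 + σ) / (1 - σ)) :=
            add_le_add h1 h2
        _ = c * ε ^ (1 + σ) * M := by rw [hM]; ring
    -- compare ε^(1+σ) with X
    set S : ℝ := (1 + t ^ 2) ^ ((1 + σ) / 2) with hS
    have hSpos : 0 < S := Real.rpow_pos_of_pos (by positivity) _
    have htp : 0 < t ^ (1 + σ) := Real.rpow_pos_of_pos ht0 _
    have hS2 : S ≤ 2 * t ^ (1 + σ) := by
      have e1 : S ≤ (2 * t ^ 2) ^ ((1 + σ) / 2) :=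
        Real.rpow_le_rpow (by positivity) (by nlinarith) (by linarith)
      have e2 : ((2:ℝ) * t ^ 2) ^ ((1 + σ) / 2)
          = 2 ^ ((1 + σ) / 2) * (t ^ 2) ^ ((1 + σ) / 2) :=
        Real.mul_rpow (by norm_num) (by positivity)
      have h21 : (2:ℝ) ^ ((1 + σ) / 2) ≤ 2 := by
        calc (2:ℝ) ^ ((1 + σ) / 2) ≤ 2 ^ (1:ℝ) :=
            Real.rpow_le_rpow_of_exponent_le one_le_two (by linarith)
          _ = 2 := Real.rpow_one 2
      have ht2 : ((t:ℝ) ^ 2) ^ ((1 + σ) / 2) = t ^ (1 + σ) := by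
        rw [show ((t:ℝ) ^ 2) = t ^ ((2:ℕ):ℝ) from (Real.rpow_natCast t 2).symm,
          ← Real.rpow_mul ht0.le, show ((2:ℕ):ℝ) * ((1 + σ) / 2) = 1 + σ by push_cast; ring]
      calc S ≤ 2 ^ ((1 + σ) / 2) * (t ^ 2) ^ ((1 + σ) / 2) := e1.trans_eq e2
        _ = 2 ^ ((1 + σ) / 2) * t ^ (1 + σ) := by rw [ht2]
        _ ≤ 2 * t ^ (1 + σ) := mul_le_mul_of_nonneg_right h21 htp.le
    have hX2 : X = S⁻¹ := by
      rw [hX, hS, neg_div, Real.rpow_neg (by positivity)]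
    have hεX : ε ^ (1 + σ) ≤ 2 * X := by
      rw [hεdef, Real.inv_rpow ht0.le, hX2, inv_eq_one_div,
        show 2 * S⁻¹ = 2 / S from by rw [div_eq_mul_inv],
        div_le_div_iff₀ htp hSpos]
      linarith
    refine htotal.trans ?_
    calc c * ε ^ (1 + σ) * M ≤ c * (2 * X) * M := by
          refine mul_le_mul_of_nonneg_right (mul_le_mul_of_nonneg_left hεX hc.le) hMpos.le
      _ = 2 * M * c * X := by ring
      _ ≤ (C₁ + 2 * M) * c * X := by nlinarith [mul_pos hc hXpos]
end

section
/- Let A be a nonnegative self-adjoint operator on L²(ℝ₊) and f a function in the domain of all powers of A, with Duhamel solution u(t) := ∫₀^t (sin((t−s)√A)/√A) F(s) ds for a continuous H-valued map F with F(0)=0. Then t∂_t applied to the spectral-side expression satisfies the integration-by-parts identity: (t∂_t − ξ∂_ξ − 1) ∫₀^t (sin((t−s)ξ)/ξ) G(s,ξ) ds = ∫₀^t (sin((t−s)ξ)/ξ)·(s∂_s − ξ∂_ξ − 1) G(s,ξ) ds + 2 ∫₀^t (sin((t−s)ξ)/ξ) G(s,ξ) ds, for every G ∈ C¹([0,∞)×(0,∞))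 with G(0,ξ)=0 and suitable decay in ξ, and every t ≥ 0, ξ > 0. -/
open MeasureTheory intervalIntegral Set

section AuxStmt19

variable {G : ℝ → ℝ → ℂ}

private lemma stmt19_contOn_G {ξ : ℝ} (hξ : 0 < ξ)
    (hG : ContDiffOn ℝ 1 (fun p : ℝ × ℝ => G p.1 p.2) (Set.Ici 0 ×ˢ Set.Ioi 0)) :
    ContinuousOn (fun s => G s ξ) (Set.Ici 0) := by
  have h1 : ContinuousOn (fun s : ℝ => ((s, ξ) : ℝ × ℝ)) (Set.Ici 0) :=
    (continuous_id.prodMk continuous_const).continuousOn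
  exact hG.continuousOn.comp h1 (fun s hs => ⟨hs, hξ⟩)

private lemma stmt19_contAt_G {s ξ : ℝ} (hs : 0 < s) (hξ : 0 < ξ)
    (hG : ContDiffOn ℝ 1 (fun p : ℝ × ℝ => G p.1 p.2) (Set.Ici 0 ×ˢ Set.Ioi 0)) :
    ContinuousAt (fun s' => G s' ξ) s := by
  have h2 : ContinuousAt (fun p : ℝ × ℝ => G p.1 p.2) (s, ξ) :=
    ((hG.contDiffAt (prod_mem_nhds (Ici_mem_nhds hs) (Ioi_mem_nhds hξ))).continuousAt)
  have h1 : Continuous (fun s' : ℝ => ((s', ξ) : ℝ × ℝ)) := continuous_id.prodMk continuous_const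
  exact ContinuousAt.comp (g := fun p : ℝ × ℝ => G p.1 p.2) (f := fun s' : ℝ => (s', ξ)) h2
    h1.continuousAt

private lemma stmt19_hasDerivAt_fst {s ζ : ℝ} (hs : 0 < s) (hζ : 0 < ζ)
    (hG : ContDiffOn ℝ 1 (fun p : ℝ × ℝ => G p.1 p.2) (Set.Ici 0 ×ˢ Set.Ioi 0)) :
    HasDerivAt (fun s' => G s' ζ)
      (fderivWithin ℝ (fun p : ℝ × ℝ => G p.1 p.2) (Set.Ici 0 ×ˢ Set.Ioi 0) (s, ζ) (1, 0)) s := by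
  have hmem : (Set.Ici (0:ℝ) ×ˢ Set.Ioi (0:ℝ)) ∈ nhds ((s, ζ) : ℝ × ℝ) :=
    prod_mem_nhds (Ici_mem_nhds hs) (Ioi_mem_nhds hζ)
  have hd : DifferentiableAt ℝ (fun p : ℝ × ℝ => G p.1 p.2) (s, ζ) :=
    ((hG.contDiffAt hmem).differentiableAt one_ne_zero)
  have hF : HasFDerivAt (fun p : ℝ × ℝ => G p.1 p.2)
      (fderivWithin ℝ (fun p : ℝ × ℝ => G p.1 p.2) (Set.Ici 0 ×ˢ Set.Ioi 0) (s, ζ)) (s, ζ) := by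
    rw [fderivWithin_of_mem_nhds hmem]; exact hd.hasFDerivAt
  exact hF.comp_hasDerivAt s ((hasDerivAt_id s).prodMk (hasDerivAt_const s ζ))

private lemma stmt19_hasDerivAt_snd {s ζ : ℝ} (hs : 0 < s) (hζ : 0 < ζ)
    (hG : ContDiffOn ℝ 1 (fun p : ℝ × ℝ => G p.1 p.2) (Set.Ici 0 ×ˢ Set.Ioi 0)) :
    HasDerivAt (fun ζ' => G s ζ')
      (fderivWithin ℝ (fun p : ℝ × ℝ => G p.1 p.2) (Set.Ici 0 ×ˢ Set.Ioi 0) (s, ζ) (0, 1)) ζ := by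
  have hmem : (Set.Ici (0:ℝ) ×ˢ Set.Ioi (0:ℝ)) ∈ nhds ((s, ζ) : ℝ × ℝ) :=
    prod_mem_nhds (Ici_mem_nhds hs) (Ioi_mem_nhds hζ)
  have hd : DifferentiableAt ℝ (fun p : ℝ × ℝ => G p.1 p.2) (s, ζ) :=
    ((hG.contDiffAt hmem).differentiableAt one_ne_zero)
  have hF : HasFDerivAt (fun p : ℝ × ℝ => G p.1 p.2)
      (fderivWithin ℝ (fun p : ℝ × ℝ => G p.1 p.2) (Set.Ici 0 ×ˢ Set.Ioi 0) (s, ζ)) (s, ζ) := by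
    rw [fderivWithin_of_mem_nhds hmem]; exact hd.hasFDerivAt
  exact hF.comp_hasDerivAt ζ ((hasDerivAt_const ζ s).prodMk (hasDerivAt_id ζ))

private lemma stmt19_fderiv_cont
    (hG : ContDiffOn ℝ 1 (fun p : ℝ × ℝ => G p.1 p.2) (Set.Ici 0 ×ˢ Set.Ioi 0)) :
    ContinuousOn (fderivWithin ℝ (fun p : ℝ × ℝ => G p.1 p.2) (Set.Ici 0 ×ˢ Set.Ioi 0))
      (Set.Ici 0 ×ˢ Set.Ioi 0) :=
  hG.continuousOn_fderivWithin ((uniqueDiffOn_Ici 0).prod (uniqueDiffOn_Ioi 0)) le_rfl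

private lemma stmt19_cont_D {ξ : ℝ} (hξ : 0 < ξ)
    (hG : ContDiffOn ℝ 1 (fun p : ℝ × ℝ => G p.1 p.2) (Set.Ici 0 ×ˢ Set.Ioi 0)) (v : ℝ × ℝ) :
    ContinuousOn
      (fun s => fderivWithin ℝ (fun p : ℝ × ℝ => G p.1 p.2) (Set.Ici 0 ×ˢ Set.Ioi 0) (s, ξ) v)
      (Set.Ici 0) := by
  have h1 : ContinuousOn (fun s : ℝ => ((s, ξ) : ℝ × ℝ)) (Set.Ici 0) :=
    (continuous_id.prodMk continuous_const).continuousOn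
  have h2 := (stmt19_fderiv_cont hG).comp h1 (fun s hs => ⟨hs, hξ⟩)
  exact (ContinuousLinearMap.apply ℝ ℂ v).continuous.comp_continuousOn h2

private lemma stmt19_t_deriv {t ξ : ℝ} (ht : 0 < t) (hξ : 0 < ξ)
    (hG : ContDiffOn ℝ 1 (fun p : ℝ × ℝ => G p.1 p.2) (Set.Ici 0 ×ˢ Set.Ioi 0)) :
    HasDerivAt (fun t' => ∫ s in (0:ℝ)..t', ((Real.sin ((t' - s) * ξ) / ξ : ℝ) : ℂ) * G s ξ)
      (∫ s in (0:ℝ)..t, ((Real.cos ((t - s) * ξ) : ℝ) : ℂ) * G s ξ) t := by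
  have hGc := stmt19_contOn_G hξ hG
  have hGt : ContinuousAt (fun s => G s ξ) t := stmt19_contAt_G ht hξ hG
  have hccos : Continuous (fun s : ℝ => ((Real.cos (s * ξ) : ℝ) : ℂ)) :=
    Complex.continuous_ofReal.comp (Real.continuous_cos.comp (continuous_mul_right ξ))
  have hcsin : Continuous (fun s : ℝ => ((Real.sin (s * ξ) : ℝ) : ℂ)) :=
    Complex.continuous_ofReal.comp (Real.continuous_sin.comp (continuous_mul_right ξ))
  have hint : ∀ φ : ℝ → ℂ, ContinuousOn φ (Set.Ici 0) → ∀ u : ℝ, 0 ≤ u →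
      IntervalIntegrable φ volume 0 u := fun φ hφ u hu =>
    (hφ.mono (by rw [Set.uIcc_of_le hu]; exact Set.Icc_subset_Ici_self)).intervalIntegrable
  have hcosc : ContinuousOn (fun s : ℝ => ((Real.cos (s * ξ) : ℝ) : ℂ) * G s ξ) (Set.Ici 0) :=
    hccos.continuousOn.mul hGc
  have hsinc : ContinuousOn (fun s : ℝ => ((Real.sin (s * ξ) : ℝ) : ℂ) * G s ξ) (Set.Ici 0) :=
    hcsin.continuousOn.mul hGc
  have hmeas : ∀ φ : ℝ → ℂ, ContinuousOn φ (Set.Ioi 0) →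
      StronglyMeasurableAtFilter φ (nhds t) volume := fun φ hφ =>
    hφ.stronglyMeasurableAtFilter isOpen_Ioi t ht
  have hCd : HasDerivAt (fun u => ∫ s in (0:ℝ)..u, ((Real.cos (s * ξ) : ℝ) : ℂ) * G s ξ)
      (((Real.cos (t * ξ) : ℝ) : ℂ) * G t ξ) t :=
    integral_hasDerivAt_right (hint _ hcosc t ht.le)
      (hmeas _ (hcosc.mono Set.Ioi_subset_Ici_self)) (hccos.continuousAt.mul hGt)
  have hSd : HasDerivAt (fun u => ∫ s in (0:ℝ)..u, ((Real.sin (s * ξ) : ℝ) : ℂ) * G s ξ)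
      (((Real.sin (t * ξ) : ℝ) : ℂ) * G t ξ) t :=
    integral_hasDerivAt_right (hint _ hsinc t ht.le)
      (hmeas _ (hsinc.mono Set.Ioi_subset_Ici_self)) (hcsin.continuousAt.mul hGt)
  have hp1 : HasDerivAt (fun t' : ℝ => ((Real.sin (t' * ξ) / ξ : ℝ) : ℂ))
      ((Real.cos (t * ξ) : ℝ) : ℂ) t := by
    have hm : HasDerivAt (fun t' : ℝ => t' * ξ) ξ t := by
      simpa using (hasDerivAt_id t).mul_const ξ
    have h : HasDerivAt (fun t' : ℝ => Real.sin (t' * ξ) / ξ) (Real.cos (t * ξ)) t := by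
      simpa [mul_div_assoc, mul_div_cancel_right₀ _ hξ.ne'] using (hm.sin).div_const ξ
    exact h.ofReal_comp
  have hp2 : HasDerivAt (fun t' : ℝ => ((Real.cos (t' * ξ) / ξ : ℝ) : ℂ))
      (-((Real.sin (t * ξ) : ℝ) : ℂ)) t := by
    have hm : HasDerivAt (fun t' : ℝ => t' * ξ) ξ t := by
      simpa using (hasDerivAt_id t).mul_const ξ
    have h : HasDerivAt (fun t' : ℝ => Real.cos (t' * ξ) / ξ) (-Real.sin (t * ξ)) t := by
      simpa [neg_mul, neg_div, mul_div_assoc, mul_div_cancel_right₀ _ hξ.ne'] using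
        (hm.cos).div_const ξ
    simpa using h.ofReal_comp
  have hF := (hp1.mul hCd).sub (hp2.mul hSd)
  have heq : (fun t' => ∫ s in (0:ℝ)..t', ((Real.sin ((t' - s) * ξ) / ξ : ℝ) : ℂ) * G s ξ)
      =ᶠ[nhds t] (fun t' : ℝ =>
      ((Real.sin (t' * ξ) / ξ : ℝ) : ℂ) * (∫ s in (0:ℝ)..t', ((Real.cos (s * ξ) : ℝ) : ℂ) * G s ξ)
      - ((Real.cos (t' * ξ) / ξ : ℝ) : ℂ) *
          (∫ s in (0:ℝ)..t', ((Real.sin (s * ξ) : ℝ) : ℂ) * G s ξ)) := by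
    filter_upwards [Ioi_mem_nhds ht] with u hu
    rw [← intervalIntegral.integral_const_mul, ← intervalIntegral.integral_const_mul,
      ← integral_sub ((hint _ hcosc u (le_of_lt hu)).const_mul _)
        ((hint _ hsinc u (le_of_lt hu)).const_mul _)]
    refine integral_congr fun s _ => ?_
    have hsin : Real.sin ((u - s) * ξ) =
        Real.sin (u * ξ) * Real.cos (s * ξ) - Real.cos (u * ξ) * Real.sin (s * ξ) := by
      rw [sub_mul, Real.sin_sub]
    rw [hsin]; push_cast; ring
  have hval : ((Real.cos (t * ξ) : ℝ) : ℂ) *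
        (∫ s in (0:ℝ)..t, ((Real.cos (s * ξ) : ℝ) : ℂ) * G s ξ)
      + ((Real.sin (t * ξ) / ξ : ℝ) : ℂ) * (((Real.cos (t * ξ) : ℝ) : ℂ) * G t ξ)
      - ((-((Real.sin (t * ξ) : ℝ) : ℂ)) *
          (∫ s in (0:ℝ)..t, ((Real.sin (s * ξ) : ℝ) : ℂ) * G s ξ)
        + ((Real.cos (t * ξ) / ξ : ℝ) : ℂ) * (((Real.sin (t * ξ) : ℝ) : ℂ) * G t ξ))
      = ∫ s in (0:ℝ)..t, ((Real.cos ((t - s) * ξ) : ℝ) : ℂ) * G s ξ := by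
    have hsplit : ∫ s in (0:ℝ)..t, ((Real.cos ((t - s) * ξ) : ℝ) : ℂ) * G s ξ
        = ((Real.cos (t * ξ) : ℝ) : ℂ) *
            (∫ s in (0:ℝ)..t, ((Real.cos (s * ξ) : ℝ) : ℂ) * G s ξ)
          + ((Real.sin (t * ξ) : ℝ) : ℂ) *
            (∫ s in (0:ℝ)..t, ((Real.sin (s * ξ) : ℝ) : ℂ) * G s ξ) := by
      rw [← intervalIntegral.integral_const_mul, ← intervalIntegral.integral_const_mul,
        ← integral_add ((hint _ hcosc t ht.le).const_mul _) ((hint _ hsinc t ht.le).const_mul _)]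
      refine integral_congr fun s _ => ?_
      have hcos : Real.cos ((t - s) * ξ) =
          Real.cos (t * ξ) * Real.cos (s * ξ) + Real.sin (t * ξ) * Real.sin (s * ξ) := by
        rw [sub_mul, Real.cos_sub]
      rw [hcos]; push_cast; ring
    rw [hsplit]; push_cast; ring
  rw [← hval]
  exact hF.congr_of_eventuallyEq heq

private lemma stmt19_xi_deriv {t ξ : ℝ} (ht : 0 < t) (hξ : 0 < ξ)
    (hG : ContDiffOn ℝ 1 (fun p : ℝ × ℝ => G p.1 p.2) (Set.Ici 0 ×ˢ Set.Ioi 0)) :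
    HasDerivAt (fun ξ' => ∫ s in (0:ℝ)..t, ((Real.sin ((t - s) * ξ') / ξ' : ℝ) : ℂ) * G s ξ')
      (∫ s in (0:ℝ)..t,
        (((t - s) * Real.cos ((t - s) * ξ) / ξ - Real.sin ((t - s) * ξ) / ξ ^ 2 : ℝ) : ℂ) * G s ξ
        + ((Real.sin ((t - s) * ξ) / ξ : ℝ) : ℂ) *
            fderivWithin ℝ (fun p : ℝ × ℝ => G p.1 p.2) (Set.Ici 0 ×ˢ Set.Ioi 0) (s, ξ) (0, 1)) ξ := by
  set S : Set (ℝ × ℝ) := Set.Ici 0 ×ˢ Set.Ioi 0 with hS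
  set D : ℝ × ℝ → (ℝ × ℝ) →L[ℝ] ℂ := fderivWithin ℝ (fun p : ℝ × ℝ => G p.1 p.2) S with hD
  have hK : IsCompact ((Set.Icc (0:ℝ) t) ×ˢ (Set.Icc (ξ/2) (2*ξ))) :=
    isCompact_Icc.prod isCompact_Icc
  have hKS : ((Set.Icc (0:ℝ) t) ×ˢ (Set.Icc (ξ/2) (2*ξ))) ⊆ S := by
    rintro ⟨a, b⟩ ⟨ha, hb⟩
    exact ⟨ha.1, lt_of_lt_of_le (by linarith) hb.1⟩
  obtain ⟨M₁, hM₁⟩ := hK.exists_bound_of_continuousOn (hG.continuousOn.mono hKS)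
  obtain ⟨M₂, hM₂⟩ := hK.exists_bound_of_continuousOn ((stmt19_fderiv_cont hG).mono hKS)
  have hM₁0 : 0 ≤ M₁ :=
    le_trans (norm_nonneg _) (hM₁ (0, ξ) ⟨⟨le_refl 0, ht.le⟩, by constructor <;> linarith⟩)
  have hM₂0 : 0 ≤ M₂ :=
    le_trans (norm_nonneg _) (hM₂ (0, ξ) ⟨⟨le_refl 0, ht.le⟩, by constructor <;> linarith⟩)
  have hιoc : Set.uIoc (0:ℝ) t = Set.Ioc 0 t := Set.uIoc_of_le ht.le
  have hball : ∀ ζ ∈ Metric.ball ξ (ξ/2), ξ/2 < ζ ∧ ζ < 2*ξ := by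
    intro ζ hζ
    rw [Metric.mem_ball, Real.dist_eq, abs_sub_lt_iff] at hζ
    constructor <;> linarith [hζ.1, hζ.2]
  refine (intervalIntegral.hasDerivAt_integral_of_dominated_loc_of_deriv_le
    (F := fun ζ s => ((Real.sin ((t - s) * ζ) / ζ : ℝ) : ℂ) * G s ζ)
    (F' := fun ζ s =>
      (((t - s) * Real.cos ((t - s) * ζ) / ζ - Real.sin ((t - s) * ζ) / ζ ^ 2 : ℝ) : ℂ) * G s ζ
      + ((Real.sin ((t - s) * ζ) / ζ : ℝ) : ℂ) * D (s, ζ) (0, 1))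
    (bound := fun _ => (t * (2/ξ) + 4/ξ^2) * M₁ + (2/ξ) * M₂)
    (Metric.ball_mem_nhds ξ (half_pos hξ)) ?_ ?_ ?_ ?_ ?_ ?_).2
  · filter_upwards [Ioi_mem_nhds hξ] with ζ hζ
    rw [hιoc]
    refine ContinuousOn.aestronglyMeasurable ?_ measurableSet_Ioc
    refine ContinuousOn.mul ?_ ((stmt19_contOn_G hζ hG).mono
      (Set.Ioc_subset_Icc_self.trans Set.Icc_subset_Ici_self))
    exact (Complex.continuous_ofReal.comp (by fun_prop)).continuousOn
  · refine ContinuousOn.intervalIntegrable ?_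
    rw [Set.uIcc_of_le ht.le]
    refine ContinuousOn.mul ?_ ((stmt19_contOn_G hξ hG).mono Set.Icc_subset_Ici_self)
    exact (Complex.continuous_ofReal.comp (by fun_prop)).continuousOn
  · rw [hιoc]
    refine ContinuousOn.aestronglyMeasurable ?_ measurableSet_Ioc
    refine ContinuousOn.add (ContinuousOn.mul ?_
        ((stmt19_contOn_G hξ hG).mono
          (Set.Ioc_subset_Icc_self.trans Set.Icc_subset_Ici_self))) (ContinuousOn.mul ?_ ?_)
    · exact (Complex.continuous_ofReal.comp (by fun_prop)).continuousOn
    · exact (Complex.continuous_ofReal.comp (by fun_prop)).continuousOn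
    · exact ((stmt19_cont_D hξ hG ((0:ℝ), (1:ℝ))).mono
        (Set.Ioc_subset_Icc_self.trans Set.Icc_subset_Ici_self))
  · refine Filter.Eventually.of_forall fun s hs ζ hζ => ?_
    rw [hιoc] at hs
    obtain ⟨hζ1, hζ2⟩ := hball ζ hζ
    have hζ0 : 0 < ζ := lt_trans (half_pos hξ) hζ1
    have hmem : ((s, ζ) : ℝ × ℝ) ∈ (Set.Icc (0:ℝ) t) ×ˢ (Set.Icc (ξ/2) (2*ξ)) :=
      ⟨⟨hs.1.le, hs.2⟩, ⟨hζ1.le, hζ2.le⟩⟩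
    have hGb : ‖G s ζ‖ ≤ M₁ := hM₁ (s, ζ) hmem
    have hDb : ‖D (s, ζ) (0, 1)‖ ≤ M₂ := by
      refine le_trans (le_trans ((D (s, ζ)).le_opNorm _) ?_) (by simpa using hM₂ (s, ζ) hmem)
      have h01 : ‖((0:ℝ), (1:ℝ))‖ = 1 := by simp [Prod.norm_def]
      rw [h01, mul_one]
    have hinv : 1/ζ ≤ 2/ξ := by
      rw [div_le_div_iff₀ hζ0 hξ]; linarith
    have hinv2 : 1/ζ^2 ≤ 4/ξ^2 := by
      rw [div_le_div_iff₀ (by positivity) (by positivity)]; nlinarith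
    have hts : |t - s| ≤ t := by
      rw [abs_of_nonneg (by linarith [hs.2])]; linarith [hs.1]
    have hr : |(t - s) * Real.cos ((t - s) * ζ) / ζ - Real.sin ((t - s) * ζ) / ζ ^ 2|
        ≤ t * (2/ξ) + 4/ξ^2 := by
      refine le_trans (abs_sub _ _) ?_
      gcongr
      · calc |(t - s) * Real.cos ((t - s) * ζ) / ζ|
            = |t - s| * |Real.cos ((t - s) * ζ)| * (1/ζ) := by
              rw [abs_div, abs_mul, abs_of_pos hζ0]; ring
          _ ≤ t * 1 * (2/ξ) := by
              gcongr <;> first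
                | exact hts | exact hinv | exact Real.abs_cos_le_one _
          _ = t * (2/ξ) := by ring
      · calc |Real.sin ((t - s) * ζ) / ζ ^ 2| = |Real.sin ((t - s) * ζ)| * (1/ζ^2) := by
              rw [abs_div, abs_of_pos (by positivity : (0:ℝ) < ζ^2)]; ring
          _ ≤ 1 * (4/ξ^2) := by
              gcongr <;> first | exact Real.abs_sin_le_one _ | exact hinv2
          _ = 4/ξ^2 := by ring
    have hk : |Real.sin ((t - s) * ζ) / ζ| ≤ 2/ξ := by
      rw [abs_div, abs_of_pos hζ0]
      calc |Real.sin ((t - s) * ζ)| / ζ = |Real.sin ((t - s) * ζ)| * (1/ζ) := by ring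
        _ ≤ 1 * (2/ξ) := by
            gcongr <;> first | exact Real.abs_sin_le_one _ | exact hinv
        _ = 2/ξ := by ring
    calc ‖(((t - s) * Real.cos ((t - s) * ζ) / ζ - Real.sin ((t - s) * ζ) / ζ ^ 2 : ℝ) : ℂ) * G s ζ
          + ((Real.sin ((t - s) * ζ) / ζ : ℝ) : ℂ) * D (s, ζ) (0, 1)‖
        ≤ ‖(((t - s) * Real.cos ((t - s) * ζ) / ζ - Real.sin ((t - s) * ζ) / ζ ^ 2 : ℝ) : ℂ)‖ *
            ‖G s ζ‖ + ‖((Real.sin ((t - s) * ζ) / ζ : ℝ) : ℂ)‖ * ‖D (s, ζ) (0, 1)‖ := by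
          refine le_trans (norm_add_le _ _) ?_
          rw [norm_mul, norm_mul]
      _ ≤ (t * (2/ξ) + 4/ξ^2) * M₁ + (2/ξ) * M₂ := by
          rw [Complex.norm_real, Complex.norm_real, Real.norm_eq_abs, Real.norm_eq_abs]
          gcongr
  · exact intervalIntegrable_const
  · refine Filter.Eventually.of_forall fun s hs ζ hζ => ?_
    rw [hιoc] at hs
    obtain ⟨hζ1, hζ2⟩ := hball ζ hζ
    have hζ0 : 0 < ζ := lt_trans (half_pos hξ) hζ1
    have hknum : HasDerivAt (fun ζ' : ℝ => Real.sin ((t - s) * ζ'))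
        ((t - s) * Real.cos ((t - s) * ζ)) ζ := by
      have hm : HasDerivAt (fun ζ' : ℝ => (t - s) * ζ') (t - s) ζ := by
        simpa using (hasDerivAt_id ζ).const_mul (t - s)
      simpa [mul_comm] using hm.sin
    have hkd : HasDerivAt (fun ζ' : ℝ => Real.sin ((t - s) * ζ') / ζ')
        ((t - s) * Real.cos ((t - s) * ζ) / ζ - Real.sin ((t - s) * ζ) / ζ ^ 2) ζ := by
      have h := hknum.div (hasDerivAt_id ζ) hζ0.ne'
      refine h.congr_deriv ?_
      simp only [id]
      field_simp
    exact (hkd.ofReal_comp).mul (stmt19_hasDerivAt_snd hs.1 hζ0 hG)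

private lemma stmt19_ibp {t ξ : ℝ} (ht : 0 < t) (hξ : 0 < ξ)
    (hG : ContDiffOn ℝ 1 (fun p : ℝ × ℝ => G p.1 p.2) (Set.Ici 0 ×ˢ Set.Ioi 0)) :
    ∫ s in (0:ℝ)..t, ((Real.sin ((t - s) * ξ) / ξ : ℝ) : ℂ) *
        ((s : ℂ) *
          fderivWithin ℝ (fun p : ℝ × ℝ => G p.1 p.2) (Set.Ici 0 ×ˢ Set.Ioi 0) (s, ξ) (1, 0))
      = (∫ s in (0:ℝ)..t, (s : ℂ) * ((Real.cos ((t - s) * ξ) : ℝ) : ℂ) * G s ξ)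
        - ∫ s in (0:ℝ)..t, ((Real.sin ((t - s) * ξ) / ξ : ℝ) : ℂ) * G s ξ := by
  set Ds : ℝ → ℂ :=
    fun s => fderivWithin ℝ (fun p : ℝ × ℝ => G p.1 p.2) (Set.Ici 0 ×ˢ Set.Ioi 0) (s, ξ) (1, 0)
    with hDs
  have hGc := stmt19_contOn_G hξ hG
  have hDc := stmt19_cont_D hξ hG ((1:ℝ), (0:ℝ))
  have hcsin : Continuous (fun s : ℝ => ((Real.sin ((t - s) * ξ) / ξ : ℝ) : ℂ)) :=
    Complex.continuous_ofReal.comp (by fun_prop)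
  have hccos : Continuous (fun s : ℝ => ((Real.cos ((t - s) * ξ) : ℝ) : ℂ)) :=
    Complex.continuous_ofReal.comp (by fun_prop)
  have hIint : ∀ φ : ℝ → ℂ, ContinuousOn φ (Set.Ici 0) → IntervalIntegrable φ volume 0 t :=
    fun φ hφ => (hφ.mono (by rw [Set.uIcc_of_le ht.le]; exact Set.Icc_subset_Ici_self)
      ).intervalIntegrable
  set f : ℝ → ℂ := fun s => ((Real.sin ((t - s) * ξ) / ξ : ℝ) : ℂ) * ((s : ℂ) * G s ξ) with hf
  set f' : ℝ → ℂ := fun s =>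
    (-((Real.cos ((t - s) * ξ) : ℝ) : ℂ)) * ((s : ℂ) * G s ξ)
    + ((Real.sin ((t - s) * ξ) / ξ : ℝ) : ℂ) * ((1 : ℂ) * G s ξ + (s : ℂ) * Ds s) with hf'
  have hderiv : ∀ s ∈ Set.Ioo 0 t, HasDerivAt f (f' s) s := by
    intro s hs
    have h1r : HasDerivAt (fun s' : ℝ => Real.sin ((t - s') * ξ) / ξ)
        (-Real.cos ((t - s) * ξ)) s := by
      have hm : HasDerivAt (fun s' : ℝ => (t - s') * ξ) (-ξ) s := by
        simpa using ((hasDerivAt_id s).const_sub t).mul_const ξ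
      have h := (hm.sin).div_const ξ
      rw [show Real.cos ((t - s) * ξ) * -ξ / ξ = -Real.cos ((t - s) * ξ) by field_simp] at h
      exact h
    have h1 : HasDerivAt (fun s' : ℝ => ((Real.sin ((t - s') * ξ) / ξ : ℝ) : ℂ))
        (-((Real.cos ((t - s) * ξ) : ℝ) : ℂ)) s := by
      simpa using h1r.ofReal_comp
    have hid : HasDerivAt (fun s' : ℝ => ((s' : ℝ) : ℂ)) 1 s := by
      simpa using (hasDerivAt_id s).ofReal_comp
    have h2 : HasDerivAt (fun s' : ℝ => (s' : ℂ) * G s' ξ) ((1:ℂ) * G s ξ + (s : ℂ) * Ds s) s :=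
      hid.mul (stmt19_hasDerivAt_fst hs.1 hξ hG)
    exact h1.mul h2
  have hcont : ContinuousOn f (Set.Icc 0 t) :=
    (hcsin.continuousOn.mul ((Complex.continuous_ofReal.continuousOn).mul
      (hGc.mono Set.Icc_subset_Ici_self))).mono (fun x hx => hx)
  have hf'c : ContinuousOn f' (Set.Ici 0) := by
    refine ContinuousOn.add ((hccos.neg.continuousOn).mul
      ((Complex.continuous_ofReal.continuousOn).mul hGc)) (hcsin.continuousOn.mul ?_)
    exact (continuousOn_const.mul hGc).add ((Complex.continuous_ofReal.continuousOn).mul hDc)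
  have hFTC : ∫ s in (0:ℝ)..t, f' s = f t - f 0 :=
    integral_eq_sub_of_hasDeriv_right_of_le ht.le hcont
      (fun s hs => (hderiv s hs).hasDerivWithinAt) (hIint f' hf'c)
  have hft : f t = 0 := by simp [hf]
  have hf0 : f 0 = 0 := by simp [hf]
  rw [hft, hf0, sub_zero] at hFTC
  have hA : IntervalIntegrable
      (fun s => (-((Real.cos ((t - s) * ξ) : ℝ) : ℂ)) * ((s : ℂ) * G s ξ)) volume 0 t :=
    hIint _ ((hccos.neg.continuousOn).mul ((Complex.continuous_ofReal.continuousOn).mul hGc))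
  have hB : IntervalIntegrable
      (fun s => ((Real.sin ((t - s) * ξ) / ξ : ℝ) : ℂ) * ((1:ℂ) * G s ξ)) volume 0 t :=
    hIint _ (hcsin.continuousOn.mul (continuousOn_const.mul hGc))
  have hC : IntervalIntegrable
      (fun s => ((Real.sin ((t - s) * ξ) / ξ : ℝ) : ℂ) * ((s : ℂ) * Ds s)) volume 0 t :=
    hIint _ (hcsin.continuousOn.mul ((Complex.continuous_ofReal.continuousOn).mul hDc))
  have hsplit : ∫ s in (0:ℝ)..t, f' s
      = (∫ s in (0:ℝ)..t, (-((Real.cos ((t - s) * ξ) : ℝ) : ℂ)) * ((s : ℂ) * G s ξ))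
        + ((∫ s in (0:ℝ)..t, ((Real.sin ((t - s) * ξ) / ξ : ℝ) : ℂ) * ((1:ℂ) * G s ξ))
          + ∫ s in (0:ℝ)..t, ((Real.sin ((t - s) * ξ) / ξ : ℝ) : ℂ) * ((s : ℂ) * Ds s)) := by
    rw [← integral_add hB hC, ← integral_add hA (hB.add hC)]
    exact integral_congr fun s _ => by simp [hf']; ring
  rw [hsplit] at hFTC
  have hneg : ∫ s in (0:ℝ)..t, (-((Real.cos ((t - s) * ξ) : ℝ) : ℂ)) * ((s : ℂ) * G s ξ)
      = -∫ s in (0:ℝ)..t, (s : ℂ) * ((Real.cos ((t - s) * ξ) : ℝ) : ℂ) * G s ξ := by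
    rw [← intervalIntegral.integral_neg]
    exact integral_congr fun s _ => by ring
  have hone : ∫ s in (0:ℝ)..t, ((Real.sin ((t - s) * ξ) / ξ : ℝ) : ℂ) * ((1:ℂ) * G s ξ)
      = ∫ s in (0:ℝ)..t, ((Real.sin ((t - s) * ξ) / ξ : ℝ) : ℂ) * G s ξ :=
    integral_congr fun s _ => by ring
  rw [hneg, hone] at hFTC
  linear_combination hFTC

end AuxStmt19

/-- The scaling vector field essentially commutes with the Duhamel integral on the
Fourier side: for `G ∈ C¹([0,∞)×(0,∞))` with `G(0,ξ) = 0`,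
`(t∂_t − ξ∂_ξ − 1)∫₀^t (sin((t−s)ξ)/ξ) G(s,ξ) ds
 = ∫₀^t (sin((t−s)ξ)/ξ)(s∂_s − ξ∂_ξ − 1)G(s,ξ) ds + 2∫₀^t (sin((t−s)ξ)/ξ) G(s,ξ) ds`. -/
theorem stmt19 (G : ℝ → ℝ → ℂ)
    (hG : ContDiffOn ℝ 1 (fun p : ℝ × ℝ => G p.1 p.2) (Set.Ici 0 ×ˢ Set.Ioi 0))
    (hG0 : ∀ ξ > (0:ℝ), G 0 ξ = 0) :
    ∀ t ≥ (0:ℝ), ∀ ξ > (0:ℝ),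
      (t : ℂ) * derivWithin
          (fun t' => ∫ s in (0:ℝ)..t', ((Real.sin ((t' - s) * ξ) / ξ : ℝ) : ℂ) * G s ξ)
          (Set.Ici 0) t
        - (ξ : ℂ) * deriv
            (fun ξ' => ∫ s in (0:ℝ)..t, ((Real.sin ((t - s) * ξ') / ξ' : ℝ) : ℂ) * G s ξ') ξ
        - ∫ s in (0:ℝ)..t, ((Real.sin ((t - s) * ξ) / ξ : ℝ) : ℂ) * G s ξ
      = (∫ s in (0:ℝ)..t, ((Real.sin ((t - s) * ξ) / ξ : ℝ) : ℂ) *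
            ((s : ℂ) * derivWithin (fun s' => G s' ξ) (Set.Ici 0) s
              - (ξ : ℂ) * deriv (fun ξ' => G s ξ') ξ - G s ξ))
        + 2 * ∫ s in (0:ℝ)..t, ((Real.sin ((t - s) * ξ) / ξ : ℝ) : ℂ) * G s ξ := by
  intro t ht ξ hξ
  rcases eq_or_lt_of_le ht with h0 | htpos
  · -- t = 0
    have h0' : t = 0 := h0.symm
    subst h0'
    have hconst : (fun ξ' => ∫ s in (0:ℝ)..(0:ℝ),
        ((Real.sin ((0 - s) * ξ') / ξ' : ℝ) : ℂ) * G s ξ') = fun _ => (0:ℂ) :=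
      funext fun _ => intervalIntegral.integral_same
    rw [hconst]
    simp
  · -- t > 0
    set S : Set (ℝ × ℝ) := Set.Ici 0 ×ˢ Set.Ioi 0 with hSdef
    set Dfst : ℝ → ℂ :=
      fun s => fderivWithin ℝ (fun p : ℝ × ℝ => G p.1 p.2) S (s, ξ) (1, 0) with hDfst
    set Dsnd : ℝ → ℂ :=
      fun s => fderivWithin ℝ (fun p : ℝ × ℝ => G p.1 p.2) S (s, ξ) (0, 1) with hDsnd
    have hGc := stmt19_contOn_G hξ hG
    have hDfc := stmt19_cont_D hξ hG ((1:ℝ), (0:ℝ))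
    have hDsc := stmt19_cont_D hξ hG ((0:ℝ), (1:ℝ))
    have hIint : ∀ φ : ℝ → ℂ, ContinuousOn φ (Set.Ici 0) → IntervalIntegrable φ volume 0 t :=
      fun φ hφ => (hφ.mono (by rw [Set.uIcc_of_le htpos.le]; exact Set.Icc_subset_Ici_self)
        ).intervalIntegrable
    have hcsin : Continuous (fun s : ℝ => ((Real.sin ((t - s) * ξ) / ξ : ℝ) : ℂ)) :=
      Complex.continuous_ofReal.comp (by fun_prop)
    have hccos : Continuous (fun s : ℝ => ((Real.cos ((t - s) * ξ) : ℝ) : ℂ)) :=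
      Complex.continuous_ofReal.comp (by fun_prop)
    have hcid : Continuous (fun s : ℝ => ((s : ℝ) : ℂ)) := Complex.continuous_ofReal
    -- the t-derivative
    have hL1 : derivWithin
        (fun t' => ∫ s in (0:ℝ)..t', ((Real.sin ((t' - s) * ξ) / ξ : ℝ) : ℂ) * G s ξ)
        (Set.Ici 0) t = ∫ s in (0:ℝ)..t, ((Real.cos ((t - s) * ξ) : ℝ) : ℂ) * G s ξ := by
      rw [derivWithin_of_mem_nhds (Ici_mem_nhds htpos)]
      exact (stmt19_t_deriv htpos hξ hG).deriv
    -- the ξ-derivative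
    have hL2 : deriv
        (fun ξ' => ∫ s in (0:ℝ)..t, ((Real.sin ((t - s) * ξ') / ξ' : ℝ) : ℂ) * G s ξ') ξ
        = ∫ s in (0:ℝ)..t,
          (((t - s) * Real.cos ((t - s) * ξ) / ξ - Real.sin ((t - s) * ξ) / ξ ^ 2 : ℝ) : ℂ) * G s ξ
          + ((Real.sin ((t - s) * ξ) / ξ : ℝ) : ℂ) * Dsnd s :=
      (stmt19_xi_deriv htpos hξ hG).deriv
    -- rewrite the RHS integrand a.e.
    have hR0 : (∫ s in (0:ℝ)..t, ((Real.sin ((t - s) * ξ) / ξ : ℝ) : ℂ) *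
          ((s : ℂ) * derivWithin (fun s' => G s' ξ) (Set.Ici 0) s
            - (ξ : ℂ) * deriv (fun ξ' => G s ξ') ξ - G s ξ))
        = ∫ s in (0:ℝ)..t, ((Real.sin ((t - s) * ξ) / ξ : ℝ) : ℂ) *
          ((s : ℂ) * Dfst s - (ξ : ℂ) * Dsnd s - G s ξ) := by
      refine integral_congr_ae (Filter.Eventually.of_forall fun s hs => ?_)
      rw [Set.uIoc_of_le htpos.le] at hs
      have hds : derivWithin (fun s' => G s' ξ) (Set.Ici 0) s = Dfst s := by
        rw [derivWithin_of_mem_nhds (Ici_mem_nhds hs.1)]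
        exact (stmt19_hasDerivAt_fst hs.1 hξ hG).deriv
      have hdξ : deriv (fun ξ' => G s ξ') ξ = Dsnd s :=
        (stmt19_hasDerivAt_snd hs.1 hξ hG).deriv
      rw [hds, hdξ]
    -- split all the integrals
    have hint1 : IntervalIntegrable
        (fun s => ((Real.sin ((t - s) * ξ) / ξ : ℝ) : ℂ) * ((s : ℂ) * Dfst s)) volume 0 t :=
      hIint _ (hcsin.continuousOn.mul ((hcid.continuousOn).mul hDfc))
    have hint2 : IntervalIntegrable
        (fun s => (ξ : ℂ) * (((Real.sin ((t - s) * ξ) / ξ : ℝ) : ℂ) * Dsnd s)) volume 0 t :=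
      (hIint _ (hcsin.continuousOn.mul hDsc)).const_mul _
    have hint3 : IntervalIntegrable
        (fun s => ((Real.sin ((t - s) * ξ) / ξ : ℝ) : ℂ) * G s ξ) volume 0 t :=
      hIint _ (hcsin.continuousOn.mul hGc)
    have hR1 : (∫ s in (0:ℝ)..t, ((Real.sin ((t - s) * ξ) / ξ : ℝ) : ℂ) *
          ((s : ℂ) * Dfst s - (ξ : ℂ) * Dsnd s - G s ξ))
        = (∫ s in (0:ℝ)..t, ((Real.sin ((t - s) * ξ) / ξ : ℝ) : ℂ) * ((s : ℂ) * Dfst s))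
          - (ξ : ℂ) * (∫ s in (0:ℝ)..t, ((Real.sin ((t - s) * ξ) / ξ : ℝ) : ℂ) * Dsnd s)
          - ∫ s in (0:ℝ)..t, ((Real.sin ((t - s) * ξ) / ξ : ℝ) : ℂ) * G s ξ := by
      rw [← intervalIntegral.integral_const_mul, ← integral_sub hint1 hint2,
        ← integral_sub (hint1.sub hint2) hint3]
      exact integral_congr fun s _ => by ring
    -- split the ξ-derivative integral
    have hintP1 : IntervalIntegrable
        (fun s => (((t - s) * Real.cos ((t - s) * ξ) / ξ : ℝ) : ℂ) * G s ξ) volume 0 t :=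
      hIint _ (((Complex.continuous_ofReal.comp (by fun_prop)).continuousOn).mul hGc)
    have hintP2 : IntervalIntegrable
        (fun s => ((Real.sin ((t - s) * ξ) / ξ ^ 2 : ℝ) : ℂ) * G s ξ) volume 0 t :=
      hIint _ (((Complex.continuous_ofReal.comp (by fun_prop)).continuousOn).mul hGc)
    have hint4 : IntervalIntegrable
        (fun s => ((Real.sin ((t - s) * ξ) / ξ : ℝ) : ℂ) * Dsnd s) volume 0 t :=
      hIint _ (hcsin.continuousOn.mul hDsc)
    have hL2split : (∫ s in (0:ℝ)..t,
          (((t - s) * Real.cos ((t - s) * ξ) / ξ - Real.sin ((t - s) * ξ) / ξ ^ 2 : ℝ) : ℂ) * G s ξ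
          + ((Real.sin ((t - s) * ξ) / ξ : ℝ) : ℂ) * Dsnd s)
        = ((∫ s in (0:ℝ)..t, (((t - s) * Real.cos ((t - s) * ξ) / ξ : ℝ) : ℂ) * G s ξ)
            - ∫ s in (0:ℝ)..t, ((Real.sin ((t - s) * ξ) / ξ ^ 2 : ℝ) : ℂ) * G s ξ)
          + ∫ s in (0:ℝ)..t, ((Real.sin ((t - s) * ξ) / ξ : ℝ) : ℂ) * Dsnd s := by
      rw [← integral_sub hintP1 hintP2, ← integral_add (hintP1.sub hintP2) hint4]
      refine integral_congr fun s _ => ?_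
      push_cast
      ring
    -- the two elementary rescalings
    have hcosG : IntervalIntegrable
        (fun s => ((Real.cos ((t - s) * ξ) : ℝ) : ℂ) * G s ξ) volume 0 t :=
      hIint _ (hccos.continuousOn.mul hGc)
    have hsCosG : IntervalIntegrable
        (fun s => (s : ℂ) * ((Real.cos ((t - s) * ξ) : ℝ) : ℂ) * G s ξ) volume 0 t :=
      hIint _ ((hcid.continuousOn.mul hccos.continuousOn).mul hGc)
    have hP1 : (ξ : ℂ) * ∫ s in (0:ℝ)..t, (((t - s) * Real.cos ((t - s) * ξ) / ξ : ℝ) : ℂ) * G s ξ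
        = (t : ℂ) * (∫ s in (0:ℝ)..t, ((Real.cos ((t - s) * ξ) : ℝ) : ℂ) * G s ξ)
          - ∫ s in (0:ℝ)..t, (s : ℂ) * ((Real.cos ((t - s) * ξ) : ℝ) : ℂ) * G s ξ := by
      rw [← intervalIntegral.integral_const_mul, ← intervalIntegral.integral_const_mul, ← integral_sub (hcosG.const_mul _) hsCosG]
      refine integral_congr fun s _ => ?_
      have hξc : (ξ : ℂ) ≠ 0 := Complex.ofReal_ne_zero.mpr hξ.ne'
      push_cast
      field_simp
    have hP2 : (ξ : ℂ) * ∫ s in (0:ℝ)..t, ((Real.sin ((t - s) * ξ) / ξ ^ 2 : ℝ) : ℂ) * G s ξ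
        = ∫ s in (0:ℝ)..t, ((Real.sin ((t - s) * ξ) / ξ : ℝ) : ℂ) * G s ξ := by
      rw [← intervalIntegral.integral_const_mul]
      refine integral_congr fun s _ => ?_
      have hξc : (ξ : ℂ) ≠ 0 := Complex.ofReal_ne_zero.mpr hξ.ne'
      push_cast
      field_simp
    -- integration by parts
    have hIBP := stmt19_ibp htpos hξ hG
    -- assemble
    rw [hL1, hL2, hR0, hR1, hL2split]
    rw [show (fderivWithin ℝ (fun p : ℝ × ℝ => G p.1 p.2) (Set.Ici 0 ×ˢ Set.Ioi 0) : ℝ × ℝ → _)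
      = fderivWithin ℝ (fun p : ℝ × ℝ => G p.1 p.2) S from rfl] at hIBP
    linear_combination -hP1 + hP2 - hIBP
end
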